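/- With d_i = (Sz)_i and y_i = v_i z_i / d_i for z > 0 and S symmetric nonnegative with unit diagonal, the quantity Σ_i v_i y_i − y^T S y equals the sum over unordered pairs {i,j} of S_{ij} y_i y_j (v_i d_j − v_j d_i)^2 / (v_i v_j d_i d_j), and is therefore nonnegative. -/

import Mathlib

open Matrix BigOperators

theorem wrgn_mass_defect_identity (n : ℕ) (S : Matrix (Fin n) (Fin n) ℝ)
    (hsym : S.IsSymm) (hdiag : ∀ i, S i i = 1)
    (hnonneg : ∀ i j, 0 ≤ S i j)
    (v z : Fin n → ℝ) (hv : ∀ i, 0 < v i) (hz : ∀ i, 0 < z i)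
    (hd : ∀ i, 0 < (S *ᵥ z) i)
    (y : Fin n → ℝ) (hy : ∀ i, y i = v i * z i / (S *ᵥ z) i) :
    (∑ i, v i * y i) - y ⬝ᵥ (S *ᵥ y) =
      ∑ i, ∑ j ∈ Finset.univ.filter (fun j => i < j),
        S i j * y i * y j *
          (v i * (S *ᵥ z) j - v j * (S *ᵥ z) i) ^ 2 /
            (v i * v j * (S *ᵥ z) i * (S *ᵥ z) j) ∧
    0 ≤ (∑ i, v i * y i) - y ⬝ᵥ (S *ᵥ y) := by
  set d : Fin n → ℝ := fun i => (S *ᵥ z) i with hdd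
  have hy0 : ∀ i, 0 < y i := fun i => by
    rw [hy i]; exact div_pos (mul_pos (hv i) (hz i)) (hd i)
  have hvne : ∀ i, v i ≠ 0 := fun i => (hv i).ne'
  have hdne : ∀ i, d i ≠ 0 := fun i => (hd i).ne'
  set F : Fin n → Fin n → ℝ := fun i j =>
      S i j * y i * y j * (v i * d j - v j * d i) ^ 2 / (v i * v j * d i * d j)
    with hF
  set g : Fin n → Fin n → ℝ := fun i j =>
      S i j * y i * y j * (v i * d j) / (d i * v j) - y i * (S i j * y j) with hg
  have hSsymm : ∀ i j, S j i = S i j := fun i j => hsym.apply i j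
  -- key expansion
  have key : ∀ i, v i * y i = ∑ j, S i j * y i * y j * (v i * d j) / (d i * v j) := by
    intro i
    have h1 : ∀ j, S i j * y i * y j * (v i * d j) / (d i * v j)
        = S i j * z j * (v i * y i / d i) := by
      intro j
      rw [hy j]
      field_simp [hvne i, hvne j, hdne i, hdne j]
      rw [mul_div_assoc]; exact (congrArg _ (div_self (hdne j))).trans (mul_one _)
    rw [Finset.sum_congr rfl fun j _ => h1 j, ← Finset.sum_mul]
    have h2 : ∑ j, S i j * z j = d i := rfl
    rw [h2, mul_comm (d i), div_mul_cancel₀ _ (hdne i)]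
  have hdot : y ⬝ᵥ (S *ᵥ y) = ∑ i, ∑ j, y i * (S i j * y j) := by
    simp [dotProduct, mulVec, Finset.mul_sum]
  have lhs_eq : (∑ i, v i * y i) - y ⬝ᵥ (S *ᵥ y) = ∑ i, ∑ j, g i j := by
    rw [hdot, Finset.sum_congr rfl fun i _ => key i, ← Finset.sum_sub_distrib]
    exact Finset.sum_congr rfl fun i _ => (Finset.sum_sub_distrib _ _).symm
  -- diagonal vanishes
  have gdiag : ∀ i, g i i = 0 := by
    intro i
    simp only [hg]
    rw [hdiag i]
    field_simp [hvne i, hdne i]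
    ring
  -- off-diagonal pairing
  have gpair : ∀ i j, i ≠ j → g i j + g j i = F i j := by
    intro i j hij
    simp only [hg, hF]
    rw [hSsymm i j]
    field_simp [hvne i, hvne j, hdne i, hdne j]
    ring
  -- split the double sum
  have split : ∑ i, ∑ j, g i j = ∑ i, ∑ j, (if i < j then F i j else 0) := by
    have tri : ∀ i j : Fin n, g i j =
        (if i < j then g i j else 0) + (if j < i then g i j else 0)
          + (if i = j then g i j else 0) := by
      intro i j
      rcases lt_trichotomy i j with h | h | h
      · simp [h, asymm h, h.ne]
      · subst h; simp
      · simp [h, asymm h, h.ne']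
    calc ∑ i, ∑ j, g i j
        = ∑ i, ∑ j, ((if i < j then g i j else 0) + (if j < i then g i j else 0)
            + (if i = j then g i j else 0)) := by
          exact Finset.sum_congr rfl fun i _ => Finset.sum_congr rfl fun j _ => tri i j
      _ = (∑ i, ∑ j, (if i < j then g i j else 0))
            + (∑ i, ∑ j, (if j < i then g i j else 0))
            + (∑ i, ∑ j, (if i = j then g i j else 0)) := by
          simp [Finset.sum_add_distrib]
      _ = (∑ i, ∑ j, (if i < j then g i j else 0))
            + (∑ i, ∑ j, (if i < j then g j i else 0)) + 0 := by
          congr 1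
          · congr 1
            rw [Finset.sum_comm]
          · simp [gdiag]
      _ = ∑ i, ∑ j, ((if i < j then g i j else 0) + (if i < j then g j i else 0)) := by
          simp [Finset.sum_add_distrib]
      _ = ∑ i, ∑ j, (if i < j then F i j else 0) := by
          refine Finset.sum_congr rfl fun i _ => Finset.sum_congr rfl fun j _ => ?_
          by_cases h : i < j
          · simp [h, gpair i j h.ne]
          · simp [h]
  have Fnonneg : ∀ i j, 0 ≤ F i j := by
    intro i j
    apply div_nonneg
    · exact mul_nonneg (mul_nonneg (mul_nonneg (hnonneg i j) (hy0 i).le) (hy0 j).le)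
        (sq_nonneg _)
    · exact (mul_pos (mul_pos (mul_pos (hv i) (hv j)) (hd i)) (hd j)).le
  have main : (∑ i, v i * y i) - y ⬝ᵥ (S *ᵥ y)
      = ∑ i, ∑ j ∈ Finset.univ.filter (fun j => i < j), F i j := by
    rw [lhs_eq, split]
    exact Finset.sum_congr rfl fun i _ => (Finset.sum_filter _ _).symm
  constructor
  · exact main
  · rw [main]
    exact Finset.sum_nonneg fun i _ => Finset.sum_nonneg fun j _ => Fnonneg i j
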